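/- Segerberg's canonical structure: for any ⊢-consistent set Φ of DAL formulas, the triple ⟨A_Φ, P_{A_Φ}, F_{A_Φ}⟩ is a deontic action algebra; that is, P_{A_Φ} and F_{A_Φ} are ideals of the Lindenbaum-Tarski Boolean algebra A_Φ and P_{A_Φ} ∩ F_{A_Φ} = {[0]_Φ}. -/

import Mathlib

namespace DAL

/-- Actions of DAL over a countable set of basic action symbols. -/
inductive Act : Type where
  | basic : ℕ → Act
  | join : Act → Act → Act
  | meet : Act → Act → Act
  | compl : Act → Act
  | zero : Act
  | one : Act

/-- Formulas of DAL. -/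
inductive Fml : Type where
  | neg : Fml → Fml
  | or : Fml → Fml → Fml
  | eq : Act → Act → Fml
  | perm : Act → Fml
  | forb : Act → Fml

/-- Material implication, defined from ¬ and ∨. -/
def fImp (p q : Fml) : Fml := .or (.neg p) q
/-- Conjunction, defined from ¬ and ∨. -/
def fAnd (p q : Fml) : Fml := .neg (.or (.neg p) (.neg q))
/-- Biconditional. -/
def fIff (p q : Fml) : Fml := fAnd (fImp p q) (fImp q p)
/-- Verum. -/
def fTop : Fml := .or (.eq .zero .zero) (.neg (.eq .zero .zero))
/-- Falsum. -/
def fBot : Fml := .neg fTop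

/-- `ARepl a b γ γ'` : γ' is obtained from γ by replacing some (possibly zero)
occurrences of the action `a` with the action `b`. -/
inductive ARepl (a b : Act) : Act → Act → Prop where
  | repl : ARepl a b a b
  | basic (n : ℕ) : ARepl a b (.basic n) (.basic n)
  | zero : ARepl a b .zero .zero
  | one : ARepl a b .one .one
  | join {x x' y y'} : ARepl a b x x' → ARepl a b y y' → ARepl a b (.join x y) (.join x' y')
  | meet {x x' y y'} : ARepl a b x x' → ARepl a b y y' → ARepl a b (.meet x y) (.meet x' y')
  | compl {x x'} : ARepl a b x x' → ARepl a b (.compl x) (.compl x')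

/-- `FRepl a b φ φ'` : φ' is obtained from φ by replacing some (possibly zero)
occurrences of the action `a` with the action `b`. -/
inductive FRepl (a b : Act) : Fml → Fml → Prop where
  | neg {p p'} : FRepl a b p p' → FRepl a b (.neg p) (.neg p')
  | or {p p' q q'} : FRepl a b p p' → FRepl a b q q' → FRepl a b (.or p q) (.or p' q')
  | eq {x x' y y'} : ARepl a b x x' → ARepl a b y y' → FRepl a b (.eq x y) (.eq x' y')
  | perm {x x'} : ARepl a b x x' → FRepl a b (.perm x) (.perm x')
  | forb {x x'} : ARepl a b x x' → FRepl a b (.forb x) (.forb x')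

/-- The axioms of the Hilbert system for DAL: a complete classical axiomatization of
¬, ∨; Boolean algebra axioms for actions plus ¬(0=1); equality and substitution
axioms; and the deontic axioms D1, D2, D3. -/
inductive Ax : Fml → Prop where
  -- classical axioms for ¬ and ∨ (Principia Mathematica style)
  | pl1 (p : Fml) : Ax (fImp (.or p p) p)
  | pl2 (p q : Fml) : Ax (fImp p (.or p q))
  | pl3 (p q : Fml) : Ax (fImp (.or p q) (.or q p))
  | pl4 (p q r : Fml) : Ax (fImp (fImp p q) (fImp (.or r p) (.or r q)))
  -- Boolean algebra axioms for actions
  | joinComm (x y : Act) : Ax (.eq (.join x y) (.join y x))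
  | meetComm (x y : Act) : Ax (.eq (.meet x y) (.meet y x))
  | joinAssoc (x y z : Act) : Ax (.eq (.join x (.join y z)) (.join (.join x y) z))
  | meetAssoc (x y z : Act) : Ax (.eq (.meet x (.meet y z)) (.meet (.meet x y) z))
  | joinDistrib (x y z : Act) : Ax (.eq (.join x (.meet y z)) (.meet (.join x y) (.join x z)))
  | meetDistrib (x y z : Act) : Ax (.eq (.meet x (.join y z)) (.join (.meet x y) (.meet x z)))
  | joinZero (x : Act) : Ax (.eq (.join x .zero) x)
  | meetOne (x : Act) : Ax (.eq (.meet x .one) x)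
  | joinCompl (x : Act) : Ax (.eq (.join x (.compl x)) .one)
  | meetCompl (x : Act) : Ax (.eq (.meet x (.compl x)) .zero)
  | nondeg : Ax (.neg (.eq .zero .one))
  -- equality axioms
  | eqRefl (x : Act) : Ax (.eq x x)
  | eqSymm (x y : Act) : Ax (fImp (.eq x y) (.eq y x))
  | eqTrans (x y z : Act) : Ax (fImp (.eq x y) (fImp (.eq y z) (.eq x z)))
  -- substitution axiom
  | subst {x y : Act} {p q : Fml} : FRepl x y p q → Ax (fImp (.eq x y) (fImp p q))
  -- deontic axioms
  | d1 (x y : Act) : Ax (fIff (.perm (.join x y)) (fAnd (.perm x) (.perm y)))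
  | d2 (x y : Act) : Ax (fIff (.forb (.join x y)) (fAnd (.forb x) (.forb y)))
  | d3 (x : Act) : Ax (fIff (.eq x .zero) (fAnd (.perm x) (.forb x)))

/-- `IsProof Φ s` : the finite sequence (list) `s` is a proof from `Φ`: every member
is an axiom, a member of `Φ`, or follows from two earlier members by modus ponens. -/
def IsProof (Φ : Set Fml) (s : List Fml) : Prop :=
  ∀ (k : ℕ) (hk : k < s.length),
    Ax (s[k]'hk) ∨ (s[k]'hk) ∈ Φ ∨
      ∃ (i j : ℕ) (hi : i < k) (hj : j < k),
        s[j]'(Nat.lt_trans hj hk) = fImp (s[i]'(Nat.lt_trans hi hk)) (s[k]'hk)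

/-- `Prov Φ φ` (Φ ⊢ φ) : there is a proof of φ from Φ. -/
def Prov (Φ : Set Fml) (φ : Fml) : Prop :=
  ∃ s : List Fml, IsProof Φ s ∧ s.getLast? = some φ

/-- Φ is ⊢-consistent. -/
def Consistent (Φ : Set Fml) : Prop := ¬ Prov Φ fBot

/-- Deductive closure. -/
def Cn (Ψ : Set Fml) : Set Fml := {φ | Prov Ψ φ}

end DAL

namespace DAL

/-- A default π:ρ/χ with prerequisite, justification, and consequent. -/
structure Default : Type where
  pre : Fml
  jus : Fml
  con : Fml

/-- A default is normal iff its justification equals its consequent. -/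
def Default.Normal (d : Default) : Prop := d.jus = d.con

/-- The operator Γ^Φ_Δ : `GammaSet Φ Δ Ψ` is the smallest set `X` of formulas such
that (i) Φ ⊆ X, (ii) X is deductively closed, and (iii) for each default π:ρ/χ in Δ,
if π ∈ X and ¬ρ ∉ Ψ then χ ∈ X. -/
def GammaSet (Φ : Set Fml) (Δ : Set Default) (Ψ : Set Fml) : Set Fml :=
  ⋂₀ {X | Φ ⊆ X ∧ X = Cn X ∧ ∀ d ∈ Δ, d.pre ∈ X → Fml.neg d.jus ∉ Ψ → d.con ∈ X}

/-- `E` is a Reiter extension of Φ under Δ iff it is a fixed point of Γ^Φ_Δ. -/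
def IsExtension (Φ : Set Fml) (Δ : Set Default) (E : Set Fml) : Prop :=
  E = GammaSet Φ Δ E

/-- Default consequence (Φ |≈_Δ φ): some Reiter extension E of Φ under Δ
satisfies E ⊢ φ. -/
def DCons (Φ : Set Fml) (Δ : Set Default) (φ : Fml) : Prop :=
  ∃ E, IsExtension Φ Δ E ∧ Prov E φ

/-- One step of a default proof: an axiom, a member of Φ, modus ponens from two
earlier members, or default detachment from an earlier member. -/
def DProofStep (Φ : Set Fml) (Δ : Set Default) (s : List Fml) (k : ℕ) (hk : k < s.length) : Prop :=
  Ax (s[k]'hk) ∨ (s[k]'hk) ∈ Φ ∨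
    (∃ (i j : ℕ) (hi : i < k) (hj : j < k),
      s[j]'(Nat.lt_trans hj hk) = fImp (s[i]'(Nat.lt_trans hi hk)) (s[k]'hk)) ∨
    (∃ (j : ℕ) (hj : j < k),
      (⟨s[j]'(Nat.lt_trans hj hk), s[k]'hk, s[k]'hk⟩ : Default) ∈ Δ)

/-- Default provability (Φ ⊢_Δ φ): there is a finite sequence ψ₁,…,ψₙ with ψₙ = φ,
each member an axiom, a member of Φ, obtained by modus ponens, or obtained by
default detachment, such that {ψ₁,…,ψₙ} is ⊢-consistent. -/
def DProv (Φ : Set Fml) (Δ : Set Default) (φ : Fml) : Prop :=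
  ∃ s : List Fml,
    (∀ (k : ℕ) (hk : k < s.length), DProofStep Φ Δ s k hk) ∧
    s.getLast? = some φ ∧
    Consistent {ψ | ψ ∈ s}

end DAL

namespace DAL

/-- The elements of the Lindenbaum-Tarski algebra A_Φ are represented by
≡_Φ-saturated sets of actions; `zeroClass Φ` represents the singleton {[0]_Φ}. -/
def zeroClass (Φ : Set Fml) : Set Act := {α | Prov Φ (.eq α .zero)}

/-- An ideal of the Lindenbaum-Tarski algebra A_Φ, represented as a ≡_Φ-saturated
set of actions closed under ⊔ and closed under ⊓ with arbitrary actions. -/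
def IsIdealLT (Φ : Set Fml) (I : Set Act) : Prop :=
  (∀ α β : Act, Prov Φ (.eq α β) → α ∈ I → β ∈ I) ∧
  (∀ α ∈ I, ∀ β ∈ I, Act.join α β ∈ I) ∧
  (∀ α ∈ I, ∀ β : Act, Act.meet α β ∈ I)

/-- The ideal of A_Φ generated by a set: the intersection of all ideals containing it. -/
def genIdealLT (Φ : Set Fml) (B : Set Act) : Set Act :=
  ⋂₀ {I : Set Act | IsIdealLT Φ I ∧ B ⊆ I}

/-- P_{A_Φ}: the smallest ideal of A_Φ containing [α]_Φ whenever Φ ⊢ P(α). -/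
def PIdeal (Φ : Set Fml) : Set Act :=
  ⋂₀ {I : Set Act | IsIdealLT Φ I ∧ ∀ α : Act, Prov Φ (.perm α) → α ∈ I}

/-- F_{A_Φ}: the smallest ideal of A_Φ containing [α]_Φ whenever Φ ⊢ F(α). -/
def FIdeal (Φ : Set Fml) : Set Act :=
  ⋂₀ {I : Set Act | IsIdealLT Φ I ∧ ∀ α : Act, Prov Φ (.forb α) → α ∈ I}

/-- The Boolean order of A_Φ: [β]_Φ ⊑ [α]_Φ iff [β]_Φ = [β]_Φ · [α]_Φ. -/
def leLT (Φ : Set Fml) (β α : Act) : Prop := Prov Φ (.eq β (.meet β α))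

/-- The deontic dual P⁰ of P_{A_Φ}. -/
def dualP (Φ : Set Fml) : Set Act :=
  {β | ∃ α : Act, Prov Φ (.neg (.perm α)) ∧ leLT Φ β α} \ PIdeal Φ

/-- The deontic dual F⁰ of F_{A_Φ}. -/
def dualF (Φ : Set Fml) : Set Act :=
  {β | ∃ α : Act, Prov Φ (.neg (.forb α)) ∧ leLT Φ β α} \ FIdeal Φ

/-- [α]_Φ ≼ P⁰: some [β]_Φ ⊑ [α]_Φ lies in P⁰. -/
def precP (Φ : Set Fml) (α : Act) : Prop := ∃ β : Act, leLT Φ β α ∧ β ∈ dualP Φ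

/-- [α]_Φ ≼ F⁰: some [β]_Φ ⊑ [α]_Φ lies in F⁰. -/
def precF (Φ : Set Fml) (α : Act) : Prop := ∃ β : Act, leLT Φ β α ∧ β ∈ dualF Φ

/-- A set of defaults consists of basic deontic defaults only: each default has the
form P(α):P(β)/P(β) or F(α):F(β)/F(β). -/
def BasicDeonticSet (Δ : Set Default) : Prop :=
  ∀ d ∈ Δ, ∃ α β : Act,
    d = ⟨Fml.perm α, Fml.perm β, Fml.perm β⟩ ∨ d = ⟨Fml.forb α, Fml.forb β, Fml.forb β⟩

/-- The conditions (i)-(iii) that the output pair (P′, F′) of the operator E^Δ_Φ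
must satisfy. -/
def EConds (Φ : Set Fml) (Δ : Set Default) (P' F' : Set Act) : Prop :=
  IsIdealLT Φ P' ∧ IsIdealLT Φ F' ∧
  PIdeal Φ ⊆ P' ∧ FIdeal Φ ⊆ F' ∧
  (∀ α β : Act, (⟨Fml.perm α, Fml.perm β, Fml.perm β⟩ : Default) ∈ Δ →
    α ∈ P' → genIdealLT Φ (P' ∪ {β}) ∩ F' = zeroClass Φ → ¬ precP Φ β → β ∈ P') ∧
  (∀ α β : Act, (⟨Fml.forb α, Fml.forb β, Fml.forb β⟩ : Default) ∈ Δ →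
    α ∈ F' → genIdealLT Φ (F' ∪ {β}) ∩ P' = zeroClass Φ → ¬ precF Φ β → β ∈ F')

/-- The operator E^Δ_Φ as a relation: `EOpRel Φ Δ (P, F) (P', F')` holds iff
(P', F') is the (componentwise) smallest pair of ideals satisfying conditions
(i)-(iii), i.e. E^Δ_Φ(P, F) = (P', F'). -/
def EOpRel (Φ : Set Fml) (Δ : Set Default) :
    Set Act × Set Act → Set Act × Set Act → Prop :=
  fun _ out =>
    EConds Φ Δ out.1 out.2 ∧ ∀ Q G : Set Act, EConds Φ Δ Q G → out.1 ⊆ Q ∧ out.2 ⊆ G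

/-- (P, F) is an algebraic extension of Φ under Δ iff it is a fixed point of E^Δ_Φ. -/
def AlgExt (Φ : Set Fml) (Δ : Set Default) (P F : Set Act) : Prop :=
  EOpRel Φ Δ (P, F) (P, F)

/-- Satisfaction in the deontic action algebra ⟨A_Φ, P, F⟩ under the canonical
valuation I_Φ(a) = [a]_Φ, with ideals of A_Φ represented as saturated sets of
actions. -/
def SatLT (Φ : Set Fml) (P F : Set Act) : Fml → Prop
  | .neg φ => ¬ SatLT Φ P F φ
  | .or φ ψ => SatLT Φ P F φ ∨ SatLT Φ P F ψ
  | .eq α β => Prov Φ (.eq α β)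
  | .perm α => α ∈ P
  | .forb α => α ∈ F

end DAL

namespace DAL

/-- Hilbert-style derivability as an inductive predicate. -/
inductive Der (Φ : Set Fml) : Fml → Prop where
  | ax {p} : Ax p → Der Φ p
  | mem {p} : p ∈ Φ → Der Φ p
  | mp {p q} : Der Φ (fImp p q) → Der Φ p → Der Φ q

namespace Der

variable {Φ : Set Fml} {p q r : Fml}

theorem syl (h1 : Der Φ (fImp p q)) (h2 : Der Φ (fImp q r)) : Der Φ (fImp p r) :=
  mp (mp (ax (Ax.pl4 q r (.neg p))) h2) h1

theorem idem (p : Fml) : Der Φ (fImp p p) :=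
  syl (ax (Ax.pl2 p p)) (ax (Ax.pl1 p))

theorem em (p : Fml) : Der Φ (.or p (.neg p)) :=
  mp (ax (Ax.pl3 (.neg p) p)) (idem p)

theorem dn1 (p : Fml) : Der Φ (fImp p (.neg (.neg p))) := em (.neg p)

theorem orMonoR (h : Der Φ (fImp q r)) : Der Φ (fImp (.or p q) (.or p r)) :=
  mp (ax (Ax.pl4 q r p)) h

theorem orMonoL (h : Der Φ (fImp p q)) : Der Φ (fImp (.or p r) (.or q r)) :=
  syl (ax (Ax.pl3 p r)) (syl (orMonoR h) (ax (Ax.pl3 r q)))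

theorem dn2 (p : Fml) : Der Φ (fImp (.neg (.neg p)) p) :=
  mp (ax (Ax.pl3 p (.neg (.neg (.neg p))))) (mp (orMonoR (dn1 (.neg p))) (em p))

theorem contrap (h : Der Φ (fImp p q)) : Der Φ (fImp (.neg q) (.neg p)) :=
  mp (ax (Ax.pl3 (.neg p) (.neg (.neg q)))) (mp (orMonoR (dn1 q)) h)

theorem addL (r p : Fml) : Der Φ (fImp p (.or r p)) :=
  syl (ax (Ax.pl2 p r)) (ax (Ax.pl3 p r))

theorem andElimL (p q : Fml) : Der Φ (fImp (fAnd p q) p) :=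
  syl (contrap (ax (Ax.pl2 (.neg p) (.neg q)))) (dn2 p)

theorem andElimR (p q : Fml) : Der Φ (fImp (fAnd p q) q) :=
  syl (contrap (addL (.neg p) (.neg q))) (dn2 q)

theorem andIntro (hp : Der Φ p) (hq : Der Φ q) : Der Φ (fAnd p q) := by
  have hnnp : Der Φ (.neg (.neg p)) := mp (dn1 p) hp
  have h2 : Der Φ (fImp (.neg p) (.neg q)) :=
    mp (ax (Ax.pl2 (.neg (.neg p)) (.neg q))) hnnp
  have h3 : Der Φ (fImp (.or (.neg p) (.neg q)) (.neg q)) :=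
    syl (orMonoL h2) (ax (Ax.pl1 (.neg q)))
  exact mp (contrap h3) (mp (dn1 q) hq)

theorem iffMp (h : Der Φ (fIff p q)) : Der Φ (fImp p q) :=
  mp (andElimL _ _) h

theorem iffMpr (h : Der Φ (fIff p q)) : Der Φ (fImp q p) :=
  mp (andElimR _ _) h

theorem exFalso (hp : Der Φ p) (hnp : Der Φ (.neg p)) : Der Φ fBot := by
  have h1 : Der Φ (fImp fTop p) := mp (addL (.neg fTop) p) hp
  exact mp (contrap h1) hnp

end Der

end DAL
namespace DAL

variable {Φ : Set Fml} {φ : Fml}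

theorem der_of_prov (h : Prov Φ φ) : Der Φ φ := by
  obtain ⟨s, hs, hlast⟩ := h
  have hne : s ≠ [] := by rintro rfl; simp at hlast
  have key : ∀ k (hk : k < s.length), Der Φ (s[k]'hk) := by
    intro k
    induction k using Nat.strong_induction_on with
    | _ k ih =>
      intro hk
      rcases hs k hk with h | h | ⟨i, j, hi, hj, hij⟩
      · exact Der.ax h
      · exact Der.mem h
      · exact Der.mp (hij ▸ ih j hj _) (ih i hi _)
  have hlen : 0 < s.length := List.length_pos_iff.2 hne
  have : s.getLast hne = φ := by
    rw [List.getLast?_eq_getLast hne] at hlast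
    exact Option.some_injective _ hlast
  rw [← this, List.getLast_eq_getElem]
  exact key _ _

theorem prov_of_der (h : Der Φ φ) : Prov Φ φ := by
  induction h with
  | ax h => exact ⟨[_], fun k hk => by simp only [List.length_singleton] at hk; interval_cases k <;> exact Or.inl h, rfl⟩
  | mem h => exact ⟨[_], fun k hk => by simp only [List.length_singleton] at hk; interval_cases k <;> exact Or.inr (Or.inl h), rfl⟩
  | mp h1 h2 ih1 ih2 =>
    rename_i p q
    obtain ⟨s1, hs1, hl1⟩ := ih1
    obtain ⟨s2, hs2, hl2⟩ := ih2
    have hne1 : s1 ≠ [] := by rintro rfl; simp at hl1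
    have hne2 : s2 ≠ [] := by rintro rfl; simp at hl2
    have hp1 : 0 < s1.length := List.length_pos_iff.2 hne1
    have hp2 : 0 < s2.length := List.length_pos_iff.2 hne2
    have hg1 : s1[s1.length - 1]'(by omega) = fImp p q := by
      have := (List.getLast?_eq_getLast hne1).symm.trans hl1
      simpa [List.getLast_eq_getElem] using Option.some_injective _ this
    have hg2 : s2[s2.length - 1]'(by omega) = p := by
      have := (List.getLast?_eq_getLast hne2).symm.trans hl2
      simpa [List.getLast_eq_getElem] using Option.some_injective _ this
    refine ⟨s1 ++ s2 ++ [q], ?_, ?_⟩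
    · intro k hk
      simp only [List.length_append, List.length_singleton] at hk
      rcases lt_trichotomy k (s1.length + s2.length) with hlt | heq | hgt
      · -- inside s1 ++ s2
        have hk' : k < (s1 ++ s2).length := by simp; omega
        have e : ∀ (m : ℕ) (hm : m < (s1++s2).length),
            ((s1 ++ s2 ++ [q])[m]'(by simp at hm ⊢; omega)) = (s1++s2)[m]'hm := by
          intro m hm; rw [List.getElem_append_left]
        rcases lt_or_ge k s1.length with hk1 | hk1
        · have e1 : ∀ (m : ℕ) (hm : m < s1.length),
              ((s1 ++ s2 ++ [q])[m]'(by simp; omega)) = s1[m]'hm := by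
            intro m hm
            rw [e m (by simp; omega), List.getElem_append_left]
          rcases hs1 k hk1 with h | h | ⟨i, j, hi, hj, hij⟩
          · exact Or.inl (by rw [e1 k hk1]; exact h)
          · exact Or.inr (Or.inl (by rw [e1 k hk1]; exact h))
          · refine Or.inr (Or.inr ⟨i, j, hi, hj, ?_⟩)
            rw [e1 k hk1, e1 i (by omega), e1 j (by omega)]; exact hij
        · have e2 : ∀ (m : ℕ) (hm : s1.length ≤ m) (hm2 : m - s1.length < s2.length),
              ((s1 ++ s2 ++ [q])[m]'(by simp; omega)) = s2[m - s1.length]'hm2 := by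
            intro m hm hm2
            rw [e m (by simp; omega), List.getElem_append_right hm]
          have hk2 : k - s1.length < s2.length := by omega
          rcases hs2 (k - s1.length) hk2 with h | h | ⟨i, j, hi, hj, hij⟩
          · exact Or.inl (by rw [e2 k hk1 hk2]; exact h)
          · exact Or.inr (Or.inl (by rw [e2 k hk1 hk2]; exact h))
          · refine Or.inr (Or.inr ⟨i + s1.length, j + s1.length, by omega, by omega, ?_⟩)
            rw [e2 k hk1 hk2, e2 (i + s1.length) (by omega) (by simpa using by omega),
              e2 (j + s1.length) (by omega) (by simpa using by omega)]
            simpa using hij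
      · -- last element: modus ponens
        subst heq
        have eq : ((s1 ++ s2 ++ [q])[s1.length + s2.length]'(by simp)) = q := by
          rw [List.getElem_append_right (by simp)]
          simp
        have ei : ((s1 ++ s2 ++ [q])[s1.length + (s2.length - 1)]'(by simp)) = p := by
          rw [List.getElem_append_left (by simp; omega), List.getElem_append_right (by omega)]
          simpa using hg2
        have ej : ((s1 ++ s2 ++ [q])[s1.length - 1]'(by simp; omega)) = fImp p q := by
          rw [List.getElem_append_left (by simp; omega), List.getElem_append_left (by omega)]
          exact hg1
        refine Or.inr (Or.inr ⟨s1.length + (s2.length - 1), s1.length - 1, by omega, by omega, ?_⟩)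
        rw [eq, ei, ej]
      · omega
    · rw [List.getLast?_concat]

end DAL
namespace DAL

theorem areplRefl (a b : Act) : ∀ c : Act, ARepl a b c c := by
  intro c
  induction c with
  | basic n => exact .basic n
  | join x y hx hy => exact .join hx hy
  | meet x y hx hy => exact .meet hx hy
  | compl x hx => exact .compl hx
  | zero => exact .zero
  | one => exact .one

namespace Der

variable {Φ : Set Fml} {x y z : Act}

theorem dsymm (h : Der Φ (.eq x y)) : Der Φ (.eq y x) :=
  mp (ax (Ax.eqSymm x y)) h

theorem dtrans (h1 : Der Φ (.eq x y)) (h2 : Der Φ (.eq y z)) : Der Φ (.eq x z) :=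
  mp (mp (ax (Ax.eqTrans x y z)) h1) h2

theorem congMeetR (α : Act) (h : Der Φ (.eq x y)) :
    Der Φ (.eq (.meet α x) (.meet α y)) := by
  have hr : FRepl x y (.eq (.meet α x) (.meet α x)) (.eq (.meet α x) (.meet α y)) :=
    .eq (areplRefl x y _) (.meet (areplRefl x y α) .repl)
  exact mp (mp (ax (Ax.subst hr)) h) (ax (Ax.eqRefl (.meet α x)))

/-- α = (α ⊓ β) ⊔ (α ⊓ β̄) -/
theorem meetSplit (α β : Act) :
    Der Φ (.eq α (.join (.meet α β) (.meet α (.compl β)))) :=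
  dtrans (dtrans (dsymm (ax (Ax.meetOne α)))
      (congMeetR α (dsymm (ax (Ax.joinCompl β)))))
    (ax (Ax.meetDistrib α β (.compl β)))

theorem permSat (h : Der Φ (.eq x y)) (hp : Der Φ (.perm x)) : Der Φ (.perm y) :=
  mp (mp (ax (Ax.subst (.perm (ARepl.repl)))) h) hp

theorem forbSat (h : Der Φ (.eq x y)) (hp : Der Φ (.forb x)) : Der Φ (.forb y) :=
  mp (mp (ax (Ax.subst (.forb (ARepl.repl)))) h) hp

theorem permJoin (hx : Der Φ (.perm x)) (hy : Der Φ (.perm y)) :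
    Der Φ (.perm (.join x y)) :=
  mp (iffMpr (ax (Ax.d1 x y))) (andIntro hx hy)

theorem forbJoin (hx : Der Φ (.forb x)) (hy : Der Φ (.forb y)) :
    Der Φ (.forb (.join x y)) :=
  mp (iffMpr (ax (Ax.d2 x y))) (andIntro hx hy)

theorem permMeet (β : Act) (hx : Der Φ (.perm x)) : Der Φ (.perm (.meet x β)) := by
  have h1 : Der Φ (.perm (.join (.meet x β) (.meet x (.compl β)))) :=
    permSat (meetSplit x β) hx
  have h2 := mp (iffMp (ax (Ax.d1 (.meet x β) (.meet x (.compl β))))) h1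
  exact mp (andElimL _ _) h2

theorem forbMeet (β : Act) (hx : Der Φ (.forb x)) : Der Φ (.forb (.meet x β)) := by
  have h1 : Der Φ (.forb (.join (.meet x β) (.meet x (.compl β)))) :=
    forbSat (meetSplit x β) hx
  have h2 := mp (iffMp (ax (Ax.d2 (.meet x β) (.meet x (.compl β))))) h1
  exact mp (andElimL _ _) h2

theorem permZero (Φ : Set Fml) : Der Φ (.perm .zero) := by
  have h : Der Φ (fAnd (.perm .zero) (.forb .zero)) := mp (iffMp (ax (Ax.d3 .zero))) (ax (Ax.eqRefl .zero))
  exact mp (andElimL _ _) h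

theorem forbZero (Φ : Set Fml) : Der Φ (.forb .zero) := by
  have h : Der Φ (fAnd (.perm .zero) (.forb .zero)) := mp (iffMp (ax (Ax.d3 .zero))) (ax (Ax.eqRefl .zero))
  exact mp (andElimR _ _) h

theorem eqZero_of_perm_forb (hp : Der Φ (.perm x)) (hf : Der Φ (.forb x)) :
    Der Φ (.eq x .zero) :=
  mp (iffMpr (ax (Ax.d3 x))) (andIntro hp hf)

end Der

end DAL
namespace DAL

variable {Φ : Set Fml}

theorem isIdeal_sInter {S : Set (Set Act)} (h : ∀ I ∈ S, IsIdealLT Φ I) :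
    IsIdealLT Φ (⋂₀ S) := by
  refine ⟨?_, ?_, ?_⟩
  · intro α β hab ha I hI
    exact (h I hI).1 α β hab (ha I hI)
  · intro α ha β hb I hI
    exact (h I hI).2.1 α (ha I hI) β (hb I hI)
  · intro α ha β I hI
    exact (h I hI).2.2 α (ha I hI) β

theorem isIdeal_PIdeal (Φ : Set Fml) : IsIdealLT Φ (PIdeal Φ) :=
  isIdeal_sInter (fun _ hI => hI.1)

theorem isIdeal_FIdeal (Φ : Set Fml) : IsIdealLT Φ (FIdeal Φ) :=
  isIdeal_sInter (fun _ hI => hI.1)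

/-- The set of provably permitted actions is an ideal. -/
theorem isIdeal_permSet (Φ : Set Fml) : IsIdealLT Φ {α | Prov Φ (.perm α)} := by
  refine ⟨?_, ?_, ?_⟩
  · intro α β hab ha
    exact prov_of_der (Der.permSat (der_of_prov hab) (der_of_prov ha))
  · intro α ha β hb
    exact prov_of_der (Der.permJoin (der_of_prov ha) (der_of_prov hb))
  · intro α ha β
    exact prov_of_der (Der.permMeet β (der_of_prov ha))

theorem isIdeal_forbSet (Φ : Set Fml) : IsIdealLT Φ {α | Prov Φ (.forb α)} := by
  refine ⟨?_, ?_, ?_⟩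
  · intro α β hab ha
    exact prov_of_der (Der.forbSat (der_of_prov hab) (der_of_prov ha))
  · intro α ha β hb
    exact prov_of_der (Der.forbJoin (der_of_prov ha) (der_of_prov hb))
  · intro α ha β
    exact prov_of_der (Der.forbMeet β (der_of_prov ha))

theorem PIdeal_subset_permSet (Φ : Set Fml) :
    PIdeal Φ ⊆ {α | Prov Φ (.perm α)} :=
  Set.sInter_subset_of_mem ⟨isIdeal_permSet Φ, fun _ h => h⟩

theorem FIdeal_subset_forbSet (Φ : Set Fml) :
    FIdeal Φ ⊆ {α | Prov Φ (.forb α)} :=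
  Set.sInter_subset_of_mem ⟨isIdeal_forbSet Φ, fun _ h => h⟩

theorem zeroClass_subset_PIdeal (Φ : Set Fml) : zeroClass Φ ⊆ PIdeal Φ := by
  intro α hα I hI
  have h0 : Act.zero ∈ I := hI.2 _ (prov_of_der (Der.permZero Φ))
  exact hI.1.1 _ _ (prov_of_der (Der.dsymm (der_of_prov hα))) h0

theorem zeroClass_subset_FIdeal (Φ : Set Fml) : zeroClass Φ ⊆ FIdeal Φ := by
  intro α hα I hI
  have h0 : Act.zero ∈ I := hI.2 _ (prov_of_der (Der.forbZero Φ))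
  exact hI.1.1 _ _ (prov_of_der (Der.dsymm (der_of_prov hα))) h0

end DAL

/-- Segerberg's canonical structure: for any ⊢-consistent Φ, the
triple ⟨A_Φ, P_{A_Φ}, F_{A_Φ}⟩ is a deontic action algebra: P_{A_Φ} and F_{A_Φ}
are ideals of the Lindenbaum-Tarski algebra A_Φ (which is nondegenerate), and
P_{A_Φ} ∩ F_{A_Φ} = {[0]_Φ}. -/
theorem DAL.canonical_deontic_action_algebra (Φ : Set DAL.Fml) (hΦ : DAL.Consistent Φ) :
    DAL.IsIdealLT Φ (DAL.PIdeal Φ) ∧ DAL.IsIdealLT Φ (DAL.FIdeal Φ) ∧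
    DAL.PIdeal Φ ∩ DAL.FIdeal Φ = DAL.zeroClass Φ ∧
    ¬ DAL.Prov Φ (DAL.Fml.eq DAL.Act.zero DAL.Act.one) := by
  refine ⟨DAL.isIdeal_PIdeal Φ, DAL.isIdeal_FIdeal Φ, ?_, ?_⟩
  · apply Set.Subset.antisymm
    · rintro α ⟨hP, hF⟩
      have hp := DAL.PIdeal_subset_permSet Φ hP
      have hf := DAL.FIdeal_subset_forbSet Φ hF
      exact DAL.prov_of_der
        (DAL.Der.eqZero_of_perm_forb (DAL.der_of_prov hp) (DAL.der_of_prov hf))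
    · intro α hα
      exact ⟨DAL.zeroClass_subset_PIdeal Φ hα, DAL.zeroClass_subset_FIdeal Φ hα⟩
  · intro h
    exact hΦ (DAL.prov_of_der
      (DAL.Der.exFalso (DAL.der_of_prov h) (DAL.Der.ax DAL.Ax.nondeg)))
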